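/- Let X be a real random variable with mean 0 and variance 1 admitting a moment generating function on an open interval around 0, and let Y = μ + σX with (μ, σ) ≠ (0, 1), σ ≥ 0. Then there exists t_0 ≠ 0 such that E[exp(t_0 Y)] ≠ E[exp(t_0 X)]. -/

import Mathlib

open MeasureTheory ProbabilityTheory

private lemma cosh_aux (u : ℝ) : 2 + u ^ 2 / 2 ≤ Real.exp u + Real.exp (-u) := by
  rcases le_total 0 u with h | h
  · have h1 := Real.quadratic_le_exp_of_nonneg h
    have h2 := Real.add_one_le_exp (-u)
    linarith
  · have h1 := Real.quadratic_le_exp_of_nonneg (neg_nonneg.2 h)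
    have h2 := Real.add_one_le_exp u
    nlinarith

private lemma exp_bound_aux {u t x : ℝ} (hu : |u| ≤ |t|) :
    Real.exp (u * x) ≤ Real.exp (t * x) + Real.exp (-t * x) := by
  have h1 : u * x ≤ |t * x| := by
    calc u * x ≤ |u * x| := le_abs_self _
      _ = |u| * |x| := abs_mul _ _
      _ ≤ |t| * |x| := mul_le_mul_of_nonneg_right hu (abs_nonneg x)
      _ = |t * x| := (abs_mul _ _).symm
  rcases abs_cases (t * x) with ⟨he, _⟩ | ⟨he, _⟩
  · rw [he] at h1
    have := Real.exp_pos (-t * x)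
    nlinarith [Real.exp_le_exp.2 h1]
  · rw [he] at h1
    have := Real.exp_pos (t * x)
    have h2 : Real.exp (u * x) ≤ Real.exp (-(t * x)) := Real.exp_le_exp.2 h1
    rw [neg_mul]
    linarith

/-- If `X` has mean `0` and variance `1` and admits a moment generating function on an
open interval around `0`, and `Y = μ' + σ'·X` with `(μ', σ') ≠ (0, 1)`, `σ' ≥ 0`, then
there is `t₀ ≠ 0` with `E[exp(t₀ Y)] ≠ E[exp(t₀ X)]`. -/
theorem stmt_14 {Ω : Type*} [MeasureSpace Ω] [IsProbabilityMeasure (ℙ : Measure Ω)]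
    (X : Ω → ℝ) (hXmeas : Measurable X) (hXmem : MemLp X 2 ℙ)
    (hmean : ∫ ω, X ω ∂ℙ = 0) (hvar : variance X ℙ = 1)
    (ε : ℝ) (hε : 0 < ε)
    (hmgf : ∀ t : ℝ, |t| < ε → Integrable (fun ω => Real.exp (t * X ω)) ℙ)
    (μ' σ' : ℝ) (hσ' : 0 ≤ σ') (hne : (μ', σ') ≠ ((0 : ℝ), (1 : ℝ))) :
    ∃ t₀ : ℝ, t₀ ≠ 0 ∧
      mgf (fun ω => μ' + σ' * X ω) ℙ t₀ ≠ mgf X ℙ t₀ := by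
  by_contra hcon
  push_neg at hcon
  have hcon' : ∀ t₀ : ℝ, t₀ ≠ 0 →
      mgf (fun ω => μ' + σ' * X ω) ℙ t₀ = mgf X ℙ t₀ := fun t ht => (hcon t ht)
  set F : ℝ → ℝ := fun t => mgf X ℙ t with hFdef
  have hX1 : Integrable X ℙ := hXmem.integrable one_le_two
  have hX2 : Integrable (fun ω => X ω ^ 2) ℙ := hXmem.integrable_sq
  have hEX2 : ∫ ω, X ω ^ 2 ∂ℙ = 1 := by
    have h := variance_eq_sub hXmem
    rw [hvar, hmean] at h
    simp only [zero_pow, ne_eq, OfNat.ofNat_ne_zero, not_false_eq_true, sub_zero] at h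
    exact h.symm
  -- transformation identity
  have htrans : ∀ t : ℝ, mgf (fun ω => μ' + σ' * X ω) ℙ t
      = Real.exp (t * μ') * F (t * σ') := by
    intro t
    have hfun : (fun ω => Real.exp (t * (μ' + σ' * X ω)))
        = fun ω => Real.exp (t * μ') * Real.exp (t * σ' * X ω) := by
      funext ω
      rw [← Real.exp_add]
      ring_nf
    simp only [mgf, hFdef]
    rw [hfun, integral_const_mul]
  have hall : ∀ t : ℝ, F t = Real.exp (t * μ') * F (t * σ') := by
    intro t
    rcases eq_or_ne t 0 with rfl | ht
    · simp [hFdef, mgf_zero]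
    · rw [show F t = mgf X ℙ t from rfl, ← hcon' t ht, htrans]
  -- F t ≥ 1 for |t| < ε
  have hFge : ∀ t : ℝ, |t| < ε → 1 ≤ F t := by
    intro t ht
    have hint := hmgf t ht
    have h1 : Integrable (fun ω => 1 + t * X ω) ℙ :=
      (integrable_const 1).add (hX1.const_mul t)
    have hle : ∀ ω, 1 + t * X ω ≤ Real.exp (t * X ω) := fun ω => by
      linarith [Real.add_one_le_exp (t * X ω)]
    calc (1 : ℝ) = ∫ ω, (1 + t * X ω) ∂ℙ := by
          rw [integral_add (integrable_const 1) (hX1.const_mul t), integral_const,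
            integral_const_mul, hmean]
          simp
      _ ≤ ∫ ω, Real.exp (t * X ω) ∂ℙ := integral_mono h1 hint hle
      _ = F t := rfl
  -- cosh lower bound
  have hcosh : ∀ t : ℝ, |t| < ε → 2 + t ^ 2 / 2 ≤ F t + F (-t) := by
    intro t ht
    have hintp := hmgf t ht
    have hintm := hmgf (-t) (by rwa [abs_neg])
    have h1 : Integrable (fun ω => 2 + t ^ 2 / 2 * X ω ^ 2) ℙ :=
      (integrable_const 2).add (hX2.const_mul _)
    have hle : ∀ ω, 2 + t ^ 2 / 2 * X ω ^ 2
        ≤ Real.exp (t * X ω) + Real.exp (-t * X ω) := by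
      intro ω
      have := cosh_aux (t * X ω)
      rw [← neg_mul] at this
      nlinarith [this]
    calc 2 + t ^ 2 / 2
        = ∫ ω, (2 + t ^ 2 / 2 * X ω ^ 2) ∂ℙ := by
          rw [integral_add (integrable_const 2) (hX2.const_mul _), integral_const,
            integral_const_mul, hEX2]
          simp
      _ ≤ ∫ ω, (Real.exp (t * X ω) + Real.exp (-t * X ω)) ∂ℙ :=
          integral_mono h1 (hintp.add hintm) hle
      _ = F t + F (-t) := integral_add hintp hintm
  -- continuity of F at 0 along geometric sequences
  have hcont : ∀ s t : ℝ, 0 ≤ s → s < 1 → |t| < ε →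
      Filter.Tendsto (fun n : ℕ => F (s ^ n * t)) Filter.atTop (nhds 1) := by
    intro s t hs0 hs1 ht
    have hbound : Integrable (fun ω => Real.exp (t * X ω) + Real.exp (-t * X ω)) ℙ :=
      (hmgf t ht).add (hmgf (-t) (by rwa [abs_neg]))
    have key : Filter.Tendsto (fun n : ℕ => ∫ ω, Real.exp (s ^ n * t * X ω) ∂ℙ)
        Filter.atTop (nhds (∫ _ω : Ω, (1 : ℝ) ∂ℙ)) := by
      apply tendsto_integral_of_dominated_convergence
        (fun ω => Real.exp (t * X ω) + Real.exp (-t * X ω))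
      · intro n
        exact (Real.measurable_exp.comp (measurable_const.mul hXmeas)).aestronglyMeasurable
      · exact hbound
      · intro n
        filter_upwards with ω
        rw [Real.norm_eq_abs, abs_of_pos (Real.exp_pos _)]
        apply exp_bound_aux
        rw [abs_mul, abs_pow]
        calc |s| ^ n * |t| ≤ 1 * |t| := by
              apply mul_le_mul_of_nonneg_right _ (abs_nonneg t)
              exact pow_le_one₀ (abs_nonneg s) (by rw [abs_of_nonneg hs0]; exact hs1.le)
          _ = |t| := one_mul _
      · filter_upwards with ω
        have h0 : Filter.Tendsto (fun n : ℕ => s ^ n * (t * X ω)) Filter.atTop (nhds 0) := by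
          simpa using (tendsto_pow_atTop_nhds_zero_of_lt_one hs0 hs1).mul_const (t * X ω)
        have := (Real.continuous_exp.tendsto 0).comp h0
        simp only [Function.comp_def, Real.exp_zero] at this
        simpa [mul_assoc] using this
    have hone : ∫ _ω : Ω, (1 : ℝ) ∂ℙ = 1 := by simp
    rw [hone] at key
    exact key
  -- main case split
  rcases eq_or_ne σ' 1 with rfl | hσ1
  · -- σ' = 1 : then μ' = 0, contradicting hne
    have hhalf : |ε / 2| < ε := by rw [abs_of_pos (by linarith)]; linarith
    have hpos : 0 < F (ε / 2) := mgf_pos (hmgf (ε / 2) hhalf)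
    have h := hall (ε / 2)
    rw [mul_one] at h
    have h2 : Real.exp (ε / 2 * μ') * F (ε / 2) = 1 * F (ε / 2) := by
      rw [one_mul]; linarith
    have h3 := mul_right_cancel₀ (ne_of_gt hpos) h2
    have h4 : ε / 2 * μ' = 0 := by rwa [Real.exp_eq_one_iff] at h3
    have hμ0 : μ' = 0 := by
      rcases mul_eq_zero.mp h4 with h5 | h5
      · linarith
      · exact h5
    exact hne (by rw [hμ0])
  · -- σ' ≠ 1 : contradiction with variance 1
    obtain ⟨s, c, hs0, hs1, hrel⟩ : ∃ s c : ℝ, 0 ≤ s ∧ s < 1 ∧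
        ∀ t : ℝ, F t = Real.exp (c * t) * F (s * t) := by
      rcases lt_or_gt_of_ne hσ1 with h | h
      · exact ⟨σ', μ', hσ', h, fun t => by
          rw [hall t, mul_comm t μ', mul_comm t σ']⟩
      · have h0 : σ' ≠ 0 := by linarith
        refine ⟨1 / σ', -μ' / σ', by positivity, ?_, ?_⟩
        · rw [div_lt_one (by linarith)]; linarith
        · intro t
          have hh := hall (t / σ')
          rw [div_mul_cancel₀ _ h0] at hh
          have key : Real.exp (-μ' / σ' * t) * F (1 / σ' * t)
              = Real.exp (-μ' / σ' * t) * (Real.exp (t / σ' * μ') * F t) := by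
            rw [show (1 / σ') * t = t / σ' by ring, hh]
          rw [key, ← mul_assoc, ← Real.exp_add,
            show -μ' / σ' * t + t / σ' * μ' = 0 by field_simp; ring, Real.exp_zero, one_mul]
    have hiter : ∀ (t : ℝ) (n : ℕ),
        F t = Real.exp (c * t * ∑ i ∈ Finset.range n, s ^ i) * F (s ^ n * t) := by
      intro t n
      induction n with
      | zero => simp
      | succ n ih =>
        rw [ih, hrel (s ^ n * t), ← mul_assoc, ← Real.exp_add, Finset.sum_range_succ,
          show s * (s ^ n * t) = s ^ (n + 1) * t by ring]
        congr 2
        ring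
    have hexp : ∀ t : ℝ, |t| < ε → F t = Real.exp (c * t * (1 - s)⁻¹) := by
      intro t ht
      have h1 : Filter.Tendsto (fun n : ℕ => ∑ i ∈ Finset.range n, s ^ i)
          Filter.atTop (nhds (1 - s)⁻¹) :=
        (hasSum_geometric_of_lt_one hs0 hs1).tendsto_sum_nat
      have h2 : Filter.Tendsto
          (fun n : ℕ => Real.exp (c * t * ∑ i ∈ Finset.range n, s ^ i) * F (s ^ n * t))
          Filter.atTop (nhds (Real.exp (c * t * (1 - s)⁻¹) * 1)) := by
        refine Filter.Tendsto.mul ?_ (hcont s t hs0 hs1 ht)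
        have := (Real.continuous_exp.tendsto (c * t * (1 - s)⁻¹)).comp (h1.const_mul (c * t))
        simpa [Function.comp_def] using this
      have h4 : (fun n : ℕ => Real.exp (c * t * ∑ i ∈ Finset.range n, s ^ i) * F (s ^ n * t))
          = fun _n : ℕ => F t := funext fun n => (hiter t n).symm
      rw [h4] at h2
      have := tendsto_nhds_unique tendsto_const_nhds h2
      rw [this, mul_one]
    have hhalf : |ε / 2| < ε := by rw [abs_of_pos (by linarith)]; linarith
    have hhalf' : |-(ε / 2)| < ε := by rwa [abs_neg]
    have hK1 : 0 ≤ c * (ε / 2) * (1 - s)⁻¹ := by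
      have := hFge (ε / 2) hhalf
      rw [hexp (ε / 2) hhalf] at this
      rwa [Real.one_le_exp_iff] at this
    have hK2 : 0 ≤ c * (-(ε / 2)) * (1 - s)⁻¹ := by
      have := hFge (-(ε / 2)) hhalf'
      rw [hexp (-(ε / 2)) hhalf'] at this
      rwa [Real.one_le_exp_iff] at this
    have hK0 : c * (ε / 2) * (1 - s)⁻¹ = 0 := by nlinarith
    have hF1 : F (ε / 2) = 1 := by
      rw [hexp (ε / 2) hhalf, hK0, Real.exp_zero]
    have hF2 : F (-(ε / 2)) = 1 := by
      rw [hexp (-(ε / 2)) hhalf', show c * (-(ε / 2)) * (1 - s)⁻¹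
        = -(c * (ε / 2) * (1 - s)⁻¹) by ring, hK0, neg_zero, Real.exp_zero]
    have := hcosh (ε / 2) hhalf
    rw [hF1, hF2] at this
    nlinarith
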